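/- arXiv:2211.10704 — 10 statements merged into one kernel-verified Lean document; each statement's English description precedes it below -/
import Mathlib

section
/- Fix k ∈ ℂ with P_n(k) ≠ 0 for all n, fix b ∈ ℂ, and define the monic quasi-type kernel polynomials of order one Q*_m(k;x) := P*_m(k;x) + b P*_{m−1}(k;x) for m ≥ 1. Set D_m(x) := x − c*_{m+1} + b and J_{m+1}(x) := b D_m(x) + λ*_{m+1}. Then for every n ≥ 1 the polynomial identity J_{n+1}(x) Q*_{n+2}(k;x) = [D_{n+1}(x) J_{n+1}(x) − b J_{n+2}(x)] Q*_{n+1}(k;x) − λ*_{n+1} J_{n+2}(x) Q*_n(k;x) holds. -/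
open Polynomial

/-- Complexification of a real polynomial. -/
noncomputable def cpx (p : Polynomial ℝ) : Polynomial ℂ :=
  p.map (algebraMap ℝ ℂ)

/-- `D_m(x) := x − c*_{m+1} + b`. -/
noncomputable def Dpoly (cstar : ℕ → ℂ) (b : ℂ) (m : ℕ) : Polynomial ℂ :=
  X - Polynomial.C (cstar (m + 1)) + Polynomial.C b

/-- `J_{m+1}(x) := b D_m(x) + λ*_{m+1}`, i.e. `J_m = b D_{m-1} + λ*_m`. -/
noncomputable def Jpoly (cstar lamstar : ℕ → ℂ) (b : ℂ) (m : ℕ) : Polynomial ℂ :=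
  Polynomial.C b * Dpoly cstar b (m - 1) + Polynomial.C (lamstar m)

/-- With `P` the monic OPS of a positive definite moment functional,
`Pstar` the monic kernel polynomials at `k` satisfying the three-term recurrence with
coefficients `c*`, `λ* ≠ 0`, and `Q*_m := P*_m + b P*_{m−1}` the monic quasi-type kernel
polynomials of order one: for every `n ≥ 1`,
`J_{n+1} Q*_{n+2} = [D_{n+1} J_{n+1} − b J_{n+2}] Q*_{n+1} − λ*_{n+1} J_{n+2} Q*_n`. -/
theorem stmt_3
    (L : Polynomial ℝ →ₗ[ℝ] ℝ)
    (hposdef : ∀ p : Polynomial ℝ, p ≠ 0 → 0 < L (p ^ 2))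
    (P : ℕ → Polynomial ℝ)
    (hmonic : ∀ n, (P n).Monic)
    (hdeg : ∀ n, (P n).natDegree = n)
    (horth : ∀ m n, m ≠ n → L (P m * P n) = 0)
    (c lam : ℕ → ℝ)
    (hP0 : P 0 = 1)
    (hP1 : P 1 = X - Polynomial.C (c 1))
    (hrec : ∀ n, 1 ≤ n → X * P n =
      P (n + 1) + Polynomial.C (c (n + 1)) * P n + Polynomial.C (lam (n + 1)) * P (n - 1))
    (hlampos : ∀ n, 1 ≤ n → 0 < lam (n + 1))
    (k : ℂ)
    (hk : ∀ n, (cpx (P n)).eval k ≠ 0)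
    (Pstar : ℕ → Polynomial ℂ)
    (hPstar : ∀ n, (X - Polynomial.C k) * Pstar n =
      cpx (P (n + 1)) -
        Polynomial.C ((cpx (P (n + 1))).eval k / (cpx (P n)).eval k) * cpx (P n))
    (cstar lamstar : ℕ → ℂ)
    (hstarrec : ∀ n, 1 ≤ n → X * Pstar n =
      Pstar (n + 1) + Polynomial.C (cstar (n + 1)) * Pstar n +
        Polynomial.C (lamstar (n + 1)) * Pstar (n - 1))
    (hlamstar : ∀ n, 1 ≤ n → lamstar (n + 1) ≠ 0)
    (b : ℂ)
    (Qstar : ℕ → Polynomial ℂ)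
    (hQstar : ∀ m, 1 ≤ m → Qstar m = Pstar m + Polynomial.C b * Pstar (m - 1)) :
    ∀ n, 1 ≤ n →
      Jpoly cstar lamstar b (n + 1) * Qstar (n + 2) =
        (Dpoly cstar b (n + 1) * Jpoly cstar lamstar b (n + 1) -
            Polynomial.C b * Jpoly cstar lamstar b (n + 2)) * Qstar (n + 1) -
          Polynomial.C (lamstar (n + 1)) * Jpoly cstar lamstar b (n + 2) * Qstar n := by
  intro n hn
  have h1 := hstarrec n hn
  have h2 := hstarrec (n + 1) (by omega)
  have q0 := hQstar n hn
  have q1 := hQstar (n + 1) (by omega)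
  have q2 := hQstar (n + 2) (by omega)
  have e1 : n + 1 - 1 = n := rfl
  have e2 : n + 2 - 1 = n + 1 := rfl
  rw [e1] at h2 q1
  rw [e2] at q2
  rw [q0, q1, q2]
  simp only [Jpoly, Dpoly, e1, e2, Nat.add_sub_cancel]
  linear_combination (-(Polynomial.C b * (X - Polynomial.C (cstar (n + 1)) + Polynomial.C b) +
      Polynomial.C (lamstar (n + 1)))) * h2 -
    (Polynomial.C b * (Polynomial.C b * (X - Polynomial.C (cstar (n + 2)) + Polynomial.C b) +
      Polynomial.C (lamstar (n + 2)))) * h1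
end

section
/- Fix k₁, k₂ ∈ ℂ with P_n(k₁) ≠ 0 and P_n(k₂) ≠ 0 for all n, fix B_{n+1} ∈ ℂ, and let T*_{n+1}(k₁;x) := P*_{n+1}(k₁;x) + B_{n+1} P*_n(k₁;x) be a monic quasi-type kernel polynomial of order one. Define η_n := −(λ_{n+2} + B_{n+1} P_{n+1}(k₁)/P_n(k₁)) · P_n(k₂)/P_{n+1}(k₂) and γ_n := c_{n+2} + P_{n+2}(k₁)/P_{n+1}(k₁) − B_{n+1} − η_n. Then for every n ≥ 0 the polynomial identity (x − k₁) T*_{n+1}(k₁;x) + η_n (x − k₂) P*_n(k₂;x) = (x − γ_n) P_{n+1}(x) holds; moreover (γ_n, η_n) is the unique pair of constants in ℂ² with this property. -/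
open Polynomial

/-- With `P` the monic OPS of a positive definite moment functional `𝓛`,
kernel polynomials `Pstar1` at `k₁` and `Pstar2` at `k₂`, and the monic quasi-type kernel
polynomial of order one `T*_{n+1}(k₁;x) = P*_{n+1}(k₁;x) + B_{n+1} P*_n(k₁;x)`: with
`η_n := −(λ_{n+2} + B_{n+1} P_{n+1}(k₁)/P_n(k₁)) P_n(k₂)/P_{n+1}(k₂)` and
`γ_n := c_{n+2} + P_{n+2}(k₁)/P_{n+1}(k₁) − B_{n+1} − η_n`, for every `n` the identity
`(x − k₁) T*_{n+1}(k₁;x) + η_n (x − k₂) P*_n(k₂;x) = (x − γ_n) P_{n+1}(x)` holds, and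
`(γ_n, η_n)` is the unique pair of constants with this property. -/
theorem stmt_4
    (L : Polynomial ℝ →ₗ[ℝ] ℝ)
    (hposdef : ∀ p : Polynomial ℝ, p ≠ 0 → 0 < L (p ^ 2))
    (P : ℕ → Polynomial ℝ)
    (hmonic : ∀ n, (P n).Monic)
    (hdeg : ∀ n, (P n).natDegree = n)
    (horth : ∀ m n, m ≠ n → L (P m * P n) = 0)
    (c lam : ℕ → ℝ)
    (hP0 : P 0 = 1)
    (hP1 : P 1 = X - Polynomial.C (c 1))
    (hrec : ∀ n, 1 ≤ n → X * P n =
      P (n + 1) + Polynomial.C (c (n + 1)) * P n + Polynomial.C (lam (n + 1)) * P (n - 1))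
    (hlampos : ∀ n, 1 ≤ n → 0 < lam (n + 1))
    (k1 k2 : ℂ)
    (hk1 : ∀ n, (cpx (P n)).eval k1 ≠ 0)
    (hk2 : ∀ n, (cpx (P n)).eval k2 ≠ 0)
    (Pstar1 : ℕ → Polynomial ℂ)
    (hPstar1 : ∀ n, (X - Polynomial.C k1) * Pstar1 n =
      cpx (P (n + 1)) -
        Polynomial.C ((cpx (P (n + 1))).eval k1 / (cpx (P n)).eval k1) * cpx (P n))
    (Pstar2 : ℕ → Polynomial ℂ)
    (hPstar2 : ∀ n, (X - Polynomial.C k2) * Pstar2 n =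
      cpx (P (n + 1)) -
        Polynomial.C ((cpx (P (n + 1))).eval k2 / (cpx (P n)).eval k2) * cpx (P n))
    (B : ℕ → ℂ) :
    ∀ n : ℕ, ∀ η γ : ℂ,
      η = -((lam (n + 2) : ℂ) +
            B (n + 1) * ((cpx (P (n + 1))).eval k1 / (cpx (P n)).eval k1)) *
          ((cpx (P n)).eval k2 / (cpx (P (n + 1))).eval k2) →
      γ = (c (n + 2) : ℂ) + (cpx (P (n + 2))).eval k1 / (cpx (P (n + 1))).eval k1 -
            B (n + 1) - η →
      ((X - Polynomial.C k1) * (Pstar1 (n + 1) + Polynomial.C (B (n + 1)) * Pstar1 n) +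
          Polynomial.C η * ((X - Polynomial.C k2) * Pstar2 n) =
        (X - Polynomial.C γ) * cpx (P (n + 1))) ∧
      ∀ γ' η' : ℂ,
        ((X - Polynomial.C k1) * (Pstar1 (n + 1) + Polynomial.C (B (n + 1)) * Pstar1 n) +
            Polynomial.C η' * ((X - Polynomial.C k2) * Pstar2 n) =
          (X - Polynomial.C γ') * cpx (P (n + 1))) →
        γ' = γ ∧ η' = η := by
  intro n η γ hη hγ
  -- abbreviations
  set a0 : ℂ := (cpx (P (n + 1))).eval k1 / (cpx (P n)).eval k1 with ha0
  set a1 : ℂ := (cpx (P (n + 2))).eval k1 / (cpx (P (n + 1))).eval k1 with ha1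
  set bn : ℂ := (cpx (P (n + 1))).eval k2 / (cpx (P n)).eval k2 with hbn
  -- complexified recurrence at n+1
  have hrecC : X * cpx (P (n + 1)) =
      cpx (P (n + 2)) + Polynomial.C ((c (n + 2) : ℝ) : ℂ) * cpx (P (n + 1)) +
        Polynomial.C ((lam (n + 2) : ℝ) : ℂ) * cpx (P n) := by
    have h := congrArg (Polynomial.map (algebraMap ℝ ℂ)) (hrec (n + 1) (by omega))
    simpa [cpx, Polynomial.map_mul, Polynomial.map_add, Polynomial.map_X,
      Polynomial.map_C] using h
  -- scalar identity for η
  have hs : η * bn + ((lam (n + 2) : ℝ) : ℂ) + B (n + 1) * a0 = 0 := by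
    rw [hη, hbn]
    have h1 := hk2 n
    have h2 := hk2 (n + 1)
    field_simp
    ring
  have hCs : Polynomial.C η * Polynomial.C bn + Polynomial.C ((lam (n + 2) : ℝ) : ℂ) +
      Polynomial.C (B (n + 1)) * Polynomial.C a0 = 0 := by
    simpa only [Polynomial.C_add, Polynomial.C_mul, map_zero] using congrArg Polynomial.C hs
  have hCγ : Polynomial.C γ = Polynomial.C ((c (n + 2) : ℝ) : ℂ) + Polynomial.C a1 -
      Polynomial.C (B (n + 1)) - Polynomial.C η := by
    simp only [hγ, Polynomial.C_add, Polynomial.C_sub]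
  have hex : (X - Polynomial.C k1) * (Pstar1 (n + 1) + Polynomial.C (B (n + 1)) * Pstar1 n) +
      Polynomial.C η * ((X - Polynomial.C k2) * Pstar2 n) =
      (X - Polynomial.C γ) * cpx (P (n + 1)) := by
    linear_combination hPstar1 (n + 1) + Polynomial.C (B (n + 1)) * hPstar1 n +
      Polynomial.C η * hPstar2 n - hrecC - cpx (P n) * hCs + cpx (P (n + 1)) * hCγ
  refine ⟨hex, ?_⟩
  intro γ' η' heq'
  have hmc : ∀ m, (cpx (P m)).Monic := fun m => (hmonic m).map _
  have hdc : ∀ m, (cpx (P m)).natDegree = m := fun m => by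
    rw [cpx, (hmonic m).natDegree_map, hdeg]
  have key : Polynomial.C (η' - η - γ + γ') * cpx (P (n + 1)) =
      Polynomial.C ((η' - η) * bn) * cpx (P n) := by
    simp only [Polynomial.C_sub, Polynomial.C_add, Polynomial.C_mul]
    linear_combination heq' - hex - (Polynomial.C η' - Polynomial.C η) * hPstar2 n
  have hc1 : (cpx (P (n + 1))).coeff (n + 1) = 1 := by
    have := (hmc (n + 1)).coeff_natDegree
    rwa [hdc] at this
  have hc0 : (cpx (P n)).coeff (n + 1) = 0 :=
    Polynomial.coeff_eq_zero_of_natDegree_lt (by rw [hdc]; omega)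
  have hd : η' - η - γ + γ' = 0 := by
    have hc := congrArg (fun p => Polynomial.coeff p (n + 1)) key
    simp only [Polynomial.coeff_C_mul, hc1, hc0, mul_one, mul_zero] at hc
    exact hc
  have he : (η' - η) * bn = 0 := by
    rw [hd, map_zero, zero_mul] at key
    have h2 := (mul_eq_zero.mp key.symm).resolve_right (hmc n).ne_zero
    exact_mod_cast Polynomial.C_eq_zero.mp h2
  have hbne : bn ≠ 0 := div_ne_zero (hk2 (n + 1)) (hk2 n)
  have hηη : η' = η := sub_eq_zero.mp ((mul_eq_zero.mp he).resolve_right hbne)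
  refine ⟨?_, hηη⟩
  rw [hηη] at hd
  linear_combination hd
end

section
/- Let μ be a positive Borel measure on ℝ with infinite support and finite moments of all orders, {P_n} its monic orthogonal polynomials with three-term recurrence coefficients c_{n+1}, λ_{n+1}, and let k ∈ ℝ with dist(k, supp μ) > 0. Set q_n := ∫ P_n(x)/(k − x) dμ(x), assume q_n ≠ 0 for all n ≥ 0, put A_n := −q_n/q_{n−1} for n ≥ 1, and define the Geronimus-transformed monic polynomials 𝑃̃_n(k;x) := P_n(x) + A_n P_{n−1}(x). Then for every n ≥ 1 the polynomial identity (x − k) P_n(x) = 𝑃̃_{n+1}(k;x) + (λ_{n+1}/A_n) 𝑃̃_n(k;x) holds, i.e. P_n(x) = (x − k)^{−1}[𝑃̃_{n+1}(k;x) − (λ_{n+1} q_{n−1}/q_n) 𝑃̃_n(k;x)]. -/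
open MeasureTheory Polynomial

/-- Let `μ` be a positive Borel measure on `ℝ` with infinite support and
finite moments of all orders, `P` its monic orthogonal polynomials with three-term
recurrence coefficients `c`, `λ`, and `k ∈ ℝ` with `dist(k, supp μ) > 0`.  With
`q n := ∫ P_n(x)/(k − x) dμ(x)` all nonzero, `A n := −q n / q (n−1)` and the
Geronimus-transformed monic polynomials `P̃_n := P_n + A_n P_{n−1}`, for every `n ≥ 1` one
has the polynomial identity `(x − k) P_n(x) = P̃_{n+1}(x) + (λ_{n+1}/A_n) P̃_n(x)`. -/
theorem stmt_6
    (μ : Measure ℝ)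
    (hinf : {x : ℝ | ∀ U ∈ nhds x, 0 < μ U}.Infinite)
    (hmom : ∀ m : ℕ, Integrable (fun x : ℝ => x ^ m) μ)
    (P : ℕ → Polynomial ℝ)
    (hmonic : ∀ n, (P n).Monic)
    (hdeg : ∀ n, (P n).natDegree = n)
    (horth : ∀ m n, m ≠ n → ∫ x, (P m).eval x * (P n).eval x ∂μ = 0)
    (c lam : ℕ → ℝ)
    (hP0 : P 0 = 1)
    (hP1 : P 1 = X - Polynomial.C (c 1))
    (hrec : ∀ n, 1 ≤ n → X * P n =
      P (n + 1) + Polynomial.C (c (n + 1)) * P n + Polynomial.C (lam (n + 1)) * P (n - 1))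
    (hlampos : ∀ n, 1 ≤ n → 0 < lam (n + 1))
    (k : ℝ)
    (hdist : ∃ ε > 0, ∀ x ∈ {x : ℝ | ∀ U ∈ nhds x, 0 < μ U}, ε ≤ |k - x|)
    (hqint : ∀ n, Integrable (fun x : ℝ => (P n).eval x / (k - x)) μ)
    (q : ℕ → ℝ)
    (hq : ∀ n, q n = ∫ x, (P n).eval x / (k - x) ∂μ)
    (hqne : ∀ n, q n ≠ 0)
    (A : ℕ → ℝ)
    (hA : ∀ n, 1 ≤ n → A n = -(q n / q (n - 1)))
    (Pt : ℕ → Polynomial ℝ)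
    (hPt : ∀ n, 1 ≤ n → Pt n = P n + Polynomial.C (A n) * P (n - 1)) :
    ∀ n, 1 ≤ n →
      (X - Polynomial.C k) * P n = Pt (n + 1) + Polynomial.C (lam (n + 1) / A n) * Pt n := by
 -- Start of proof
  -- k is not in the support, so μ {k} = 0 and a.e. x ≠ k
  have hknot : ¬ (∀ U ∈ nhds k, 0 < μ U) := by
    obtain ⟨ε, hε, h⟩ := hdist
    intro hk
    have := h k hk
    simp at this
    linarith
  push_neg at hknot
  obtain ⟨U, hU, hUμ⟩ := hknot
  have hμU : μ U = 0 := le_antisymm hUμ zero_le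
  have hae : ∀ᵐ x ∂μ, x ≠ k := by
    have hk0 : μ {k} = 0 :=
      measure_mono_null (Set.singleton_subset_iff.mpr (mem_of_mem_nhds hU)) hμU
    have : {x : ℝ | ¬ x ≠ k} = {k} := by ext x; simp [eq_comm]
    rw [MeasureTheory.ae_iff, this]; exact hk0
  have hint : ∀ p : Polynomial ℝ, Integrable (fun x => p.eval x) μ := by
    intro p
    induction p using Polynomial.induction_on' with
    | add p q hp hq => simp only [Polynomial.eval_add]; exact hp.add hq
    | monomial m a => simpa [Polynomial.eval_monomial] using (hmom m).const_mul a
  have hint0 : ∀ n, 1 ≤ n → ∫ x, (P n).eval x ∂μ = 0 := by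
    intro n hn
    have := horth n 0 (by omega)
    simpa [hP0] using this
  have hqrec : ∀ n, 1 ≤ n → (k - c (n+1)) * q n = q (n+1) + lam (n+1) * q (n-1) := by
    intro n hn
    have hr := hrec n hn
    have heval : ∀ x : ℝ, x * (P n).eval x
        = (P (n+1)).eval x + c (n+1) * (P n).eval x + lam (n+1) * (P (n-1)).eval x := by
      intro x
      have := congrArg (Polynomial.eval x) hr
      simpa [Polynomial.eval_add, Polynomial.eval_mul] using this
    have h1 : ∫ x, x * (P n).eval x / (k - x) ∂μ = k * q n := by
      have hcong : ∀ᵐ x ∂μ, x * (P n).eval x / (k - x)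
          = -((P n).eval x) + k * ((P n).eval x / (k - x)) := by
        filter_upwards [hae] with x hx
        have hkx : k - x ≠ 0 := sub_ne_zero.mpr (Ne.symm hx)
        field_simp
        ring
      have ha : Integrable (fun x : ℝ => -(Polynomial.eval x (P n))) μ := (hint (P n)).neg
      have hb : Integrable (fun x : ℝ => k * (Polynomial.eval x (P n) / (k - x))) μ :=
        (hqint n).const_mul k
      have hadd := integral_add ha hb
      rw [integral_congr_ae hcong, hadd, integral_neg, hint0 n hn,
        integral_const_mul _ _, ← hq n]
      ring
    have h2 : ∫ x, x * (P n).eval x / (k - x) ∂μ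
        = q (n+1) + c (n+1) * q n + lam (n+1) * q (n-1) := by
      have hcong : ∀ x : ℝ, x * (P n).eval x / (k - x)
          = (P (n+1)).eval x / (k - x) + c (n+1) * ((P n).eval x / (k - x))
            + lam (n+1) * ((P (n-1)).eval x / (k - x)) := by
        intro x
        rw [heval x]
        ring
      simp only [hcong]
      have ha : Integrable (fun x : ℝ => Polynomial.eval x (P (n+1)) / (k - x)
          + c (n+1) * (Polynomial.eval x (P n) / (k - x))) μ :=
        (hqint (n+1)).add ((hqint n).const_mul (c (n+1)))
      have hb : Integrable (fun x : ℝ => lam (n+1) * (Polynomial.eval x (P (n-1)) / (k - x))) μ :=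
        (hqint (n-1)).const_mul (lam (n+1))
      have hadd1 := integral_add ha hb
      have hadd2 := integral_add (hqint (n+1)) ((hqint n).const_mul (c (n+1)))
      rw [hadd1, hadd2, integral_const_mul _ _, integral_const_mul _ _, ← hq, ← hq, ← hq]
    have hcomb := h1.symm.trans h2
    linarith [hcomb]
  intro n hn
  have hAn : A n ≠ 0 := by
    rw [hA n hn]
    exact neg_ne_zero.mpr (div_ne_zero (hqne n) (hqne _))
  have hc : c (n+1) - k = A (n+1) + lam (n+1) / A n := by
    have hr := hqrec n hn
    rw [hA (n+1) (by omega), hA n hn]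
    have h0 := hqne n
    have h1 := hqne (n-1)
    simp only [Nat.add_sub_cancel]
    rw [div_neg, div_div_eq_mul_div]
    field_simp
    linear_combination (-1) * hr
  have hC : Polynomial.C (lam (n+1))
      = Polynomial.C (lam (n+1) / A n) * Polynomial.C (A n) := by
    rw [← Polynomial.C_mul, div_mul_cancel₀ _ hAn]
  have key : (X - Polynomial.C k) * P n
      = P (n+1) + Polynomial.C (c (n+1) - k) * P n + Polynomial.C (lam (n+1)) * P (n-1) := by
    rw [sub_mul, hrec n hn, Polynomial.C_sub]
    ring
  rw [hPt (n+1) (by omega), hPt n hn]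
  simp only [Nat.add_sub_cancel]
  rw [key, hc, map_add, hC]
  ring
end

section
/- Fix k₂ ∈ ℂ with P_n(k₂) ≠ 0 for all n, fix n ≥ 1 and constants A_{n+1}, B̃_n ∈ ℂ with λ_{n+1} + B̃_n P_n(k₂)/P_{n−1}(k₂) ≠ 0. Let 𝑃̃_{n+1}(x) := P_{n+1}(x) + A_{n+1} P_n(x) (a Geronimus-transformed monic polynomial) and T*_n(k₂;x) := P*_n(k₂;x) + B̃_n P*_{n−1}(k₂;x) (a monic quasi-type kernel polynomial of order one). Define η_n := −λ_{n+1}/(λ_{n+1} + B̃_n P_n(k₂)/P_{n−1}(k₂)), α_n := 1 + η_n, and γ_n := c_{n+1}(1 + η_n) − A_{n+1} + η_n P_{n+1}(k₂)/P_n(k₂) − η_n B̃_n. Then the polynomial identity 𝑃̃_{n+1}(x) + η_n (x − k₂) T*_n(k₂;x) = (α_n x − γ_n) P_n(x) holds. -/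
open Polynomial

/-- With `P` the monic OPS of a positive definite moment functional,
`Pstar2` the monic kernel polynomials at `k₂`, the Geronimus-transformed monic polynomial
`P̃_{n+1} := P_{n+1} + A_{n+1} P_n` and the monic quasi-type kernel polynomial of order one
`T*_n(k₂;x) := P*_n(k₂;x) + B̃_n P*_{n−1}(k₂;x)` (`n ≥ 1`): with
`η_n := −λ_{n+1}/(λ_{n+1} + B̃_n P_n(k₂)/P_{n−1}(k₂))`, `α_n := 1 + η_n` and
`γ_n := c_{n+1}(1 + η_n) − A_{n+1} + η_n P_{n+1}(k₂)/P_n(k₂) − η_n B̃_n`, the identity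
`P̃_{n+1}(x) + η_n (x − k₂) T*_n(k₂;x) = (α_n x − γ_n) P_n(x)` holds. -/
theorem stmt_7
    (L : Polynomial ℝ →ₗ[ℝ] ℝ)
    (hposdef : ∀ p : Polynomial ℝ, p ≠ 0 → 0 < L (p ^ 2))
    (P : ℕ → Polynomial ℝ)
    (hmonic : ∀ n, (P n).Monic)
    (hdeg : ∀ n, (P n).natDegree = n)
    (horth : ∀ m n, m ≠ n → L (P m * P n) = 0)
    (c lam : ℕ → ℝ)
    (hP0 : P 0 = 1)
    (hP1 : P 1 = X - Polynomial.C (c 1))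
    (hrec : ∀ n, 1 ≤ n → X * P n =
      P (n + 1) + Polynomial.C (c (n + 1)) * P n + Polynomial.C (lam (n + 1)) * P (n - 1))
    (hlampos : ∀ n, 1 ≤ n → 0 < lam (n + 1))
    (k2 : ℂ)
    (hk2 : ∀ n, (cpx (P n)).eval k2 ≠ 0)
    (Pstar2 : ℕ → Polynomial ℂ)
    (hPstar2 : ∀ n, (X - Polynomial.C k2) * Pstar2 n =
      cpx (P (n + 1)) -
        Polynomial.C ((cpx (P (n + 1))).eval k2 / (cpx (P n)).eval k2) * cpx (P n))
    (n : ℕ) (hn : 1 ≤ n)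
    (A B : ℂ)
    (hden : (lam (n + 1) : ℂ) +
        B * ((cpx (P n)).eval k2 / (cpx (P (n - 1))).eval k2) ≠ 0) :
    ∀ η α γ : ℂ,
      η = -((lam (n + 1) : ℂ) /
            ((lam (n + 1) : ℂ) +
              B * ((cpx (P n)).eval k2 / (cpx (P (n - 1))).eval k2))) →
      α = 1 + η →
      γ = (c (n + 1) : ℂ) * (1 + η) - A +
            η * ((cpx (P (n + 1))).eval k2 / (cpx (P n)).eval k2) - η * B →
      cpx (P (n + 1)) + Polynomial.C A * cpx (P n) +
          Polynomial.C η * ((X - Polynomial.C k2) *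
            (Pstar2 n + Polynomial.C B * Pstar2 (n - 1))) =
        (Polynomial.C α * X - Polynomial.C γ) * cpx (P n) := by
  intro eta alpha gamma heta halpha hgamma
  subst halpha hgamma
  -- complexified recurrence
  have hrecC : (X : Polynomial ℂ) * cpx (P n) =
      cpx (P (n + 1)) + Polynomial.C ((c (n + 1) : ℂ)) * cpx (P n) +
        Polynomial.C ((lam (n + 1) : ℂ)) * cpx (P (n - 1)) := by
    have := congrArg (Polynomial.map (algebraMap ℝ ℂ)) (hrec n hn)
    simpa [cpx, Polynomial.map_mul, Polynomial.map_add, Polynomial.map_X,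
      Polynomial.map_C, Complex.coe_algebraMap] using this
  have h1 := hPstar2 n
  have h2 := hPstar2 (n - 1)
  rw [Nat.sub_add_cancel hn] at h2
  set r : ℂ := (cpx (P n)).eval k2 / (cpx (P (n - 1))).eval k2 with hr
  have hz : (1 + eta) * (lam (n + 1) : ℂ) + eta * B * r = 0 := by
    rw [heta]
    field_simp
    ring
  have hzC : Polynomial.C ((1 + eta) * (lam (n + 1) : ℂ) + eta * B * r)
      = (0 : Polynomial ℂ) := by rw [hz, map_zero]
  simp only [map_add, map_mul, map_sub, map_one, map_neg] at hzC ⊢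
  linear_combination (Polynomial.C eta) * h1 + (Polynomial.C eta * Polynomial.C B) * h2
    - (1 + Polynomial.C eta) * hrecC - cpx (P (n - 1)) * hzC
end

section
/- Fix k₁, k₂ ∈ ℂ with P_n(k₁) ≠ 0 and P_n(k₂) ≠ 0 for all n, fix n ≥ 1 and constants T_n, B̃_n ∈ ℂ with λ_{n+1} + B̃_n P_n(k₂)/P_{n−1}(k₂) ≠ 0. Let 𝑃̂_n(x) := P_n(x) − T_n P*_{n−1}(k₁;x) (an Uvarov-transformed monic polynomial) and T*_n(k₂;x) := P*_n(k₂;x) + B̃_n P*_{n−1}(k₂;x) (a monic quasi-type kernel polynomial of order one). Define η_n := T_n (P_n(k₁)/P_{n−1}(k₁)) / (B̃_n P_n(k₂)/P_{n−1}(k₂) + λ_{n+1}), α_n := 1 + η_n, and β_n := k₁ + T_n + (c_{n+1} − B̃_n + P_{n+1}(k₂)/P_n(k₂)) η_n. Then the polynomial identity (x − k₁) 𝑃̂_n(x) + η_n (x − k₂) T*_n(k₂;x) = (α_n x − β_n) P_n(x) holds. -/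
open Polynomial

/-- With `P` the monic OPS of a positive definite moment functional,
kernel polynomials `Pstar1` at `k₁` and `Pstar2` at `k₂`, the Uvarov-transformed monic
polynomial `P̂_n := P_n − T_n P*_{n−1}(k₁;·)` and the monic quasi-type kernel polynomial of
order one `T*_n(k₂;·) := P*_n(k₂;·) + B̃_n P*_{n−1}(k₂;·)` (`n ≥ 1`): with
`η_n := T_n (P_n(k₁)/P_{n−1}(k₁)) / (B̃_n P_n(k₂)/P_{n−1}(k₂) + λ_{n+1})`, `α_n := 1 + η_n`
and `β_n := k₁ + T_n + (c_{n+1} − B̃_n + P_{n+1}(k₂)/P_n(k₂)) η_n`, the identity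
`(x − k₁) P̂_n(x) + η_n (x − k₂) T*_n(k₂;x) = (α_n x − β_n) P_n(x)` holds. -/
theorem stmt_8
    (L : Polynomial ℝ →ₗ[ℝ] ℝ)
    (hposdef : ∀ p : Polynomial ℝ, p ≠ 0 → 0 < L (p ^ 2))
    (P : ℕ → Polynomial ℝ)
    (hmonic : ∀ n, (P n).Monic)
    (hdeg : ∀ n, (P n).natDegree = n)
    (horth : ∀ m n, m ≠ n → L (P m * P n) = 0)
    (c lam : ℕ → ℝ)
    (hP0 : P 0 = 1)
    (hP1 : P 1 = X - Polynomial.C (c 1))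
    (hrec : ∀ n, 1 ≤ n → X * P n =
      P (n + 1) + Polynomial.C (c (n + 1)) * P n + Polynomial.C (lam (n + 1)) * P (n - 1))
    (hlampos : ∀ n, 1 ≤ n → 0 < lam (n + 1))
    (k1 k2 : ℂ)
    (hk1 : ∀ n, (cpx (P n)).eval k1 ≠ 0)
    (hk2 : ∀ n, (cpx (P n)).eval k2 ≠ 0)
    (Pstar1 : ℕ → Polynomial ℂ)
    (hPstar1 : ∀ n, (X - Polynomial.C k1) * Pstar1 n =
      cpx (P (n + 1)) -
        Polynomial.C ((cpx (P (n + 1))).eval k1 / (cpx (P n)).eval k1) * cpx (P n))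
    (Pstar2 : ℕ → Polynomial ℂ)
    (hPstar2 : ∀ n, (X - Polynomial.C k2) * Pstar2 n =
      cpx (P (n + 1)) -
        Polynomial.C ((cpx (P (n + 1))).eval k2 / (cpx (P n)).eval k2) * cpx (P n))
    (n : ℕ) (hn : 1 ≤ n)
    (T B : ℂ)
    (hden : B * ((cpx (P n)).eval k2 / (cpx (P (n - 1))).eval k2) +
        (lam (n + 1) : ℂ) ≠ 0) :
    ∀ η α β : ℂ,
      η = T * ((cpx (P n)).eval k1 / (cpx (P (n - 1))).eval k1) /
            (B * ((cpx (P n)).eval k2 / (cpx (P (n - 1))).eval k2) +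
              (lam (n + 1) : ℂ)) →
      α = 1 + η →
      β = k1 + T + ((c (n + 1) : ℂ) - B +
            (cpx (P (n + 1))).eval k2 / (cpx (P n)).eval k2) * η →
      (X - Polynomial.C k1) * (cpx (P n) - Polynomial.C T * Pstar1 (n - 1)) +
          Polynomial.C η * ((X - Polynomial.C k2) *
            (Pstar2 n + Polynomial.C B * Pstar2 (n - 1))) =
        (Polynomial.C α * X - Polynomial.C β) * cpx (P n) := by

  intro η α β hη hα hβ
  obtain ⟨m, rfl⟩ : ∃ m, n = m + 1 := ⟨n - 1, (Nat.succ_pred_eq_of_pos hn).symm⟩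
  simp only [Nat.add_sub_cancel] at *
  -- key scalar identity: η * (B * r2 + λ) = T * r1
  have hkey : η * (B * ((cpx (P (m + 1))).eval k2 / (cpx (P m)).eval k2) +
      (lam (m + 1 + 1) : ℂ)) =
      T * ((cpx (P (m + 1))).eval k1 / (cpx (P m)).eval k1) := by
    rw [hη, div_mul_cancel₀ _ hden]
  have key := congrArg (Polynomial.C : ℂ →+* Polynomial ℂ) hkey
  simp only [map_mul, map_add] at key
  -- complexified recurrence
  have Erec := congrArg (fun p => p.map (algebraMap ℝ ℂ)) (hrec (m + 1) (by omega))
  simp only [Polynomial.map_mul, Polynomial.map_add, Polynomial.map_X,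
    Polynomial.map_C, Nat.add_sub_cancel] at Erec
  have Erec' : X * cpx (P (m + 1)) = cpx (P (m + 2)) +
      Polynomial.C ((c (m + 2) : ℂ)) * cpx (P (m + 1)) +
      Polynomial.C ((lam (m + 2) : ℂ)) * cpx (P m) := by
    simpa [cpx, Complex.coe_algebraMap] using Erec
  have E1 := hPstar1 m
  have E2 := hPstar2 m
  have E3 := hPstar2 (m + 1)
  subst hα hβ
  have h2 : m + 1 + 1 = m + 2 := rfl
  rw [h2] at key ⊢
  simp only [map_add, map_sub, map_mul, map_one]
  linear_combination (-(Polynomial.C T)) * E1 + Polynomial.C η * E3 +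
    (Polynomial.C η * Polynomial.C B) * E2 - Polynomial.C η * Erec' -
    cpx (P m) * key
end

section
/- Fix k₁, k₂, k₃ ∈ ℂ with P_n(k₁) ≠ 0, P_n(k₂) ≠ 0, and K_n(k₂,k₃) := Σ_{j=0}^{n} P_j(k₂)P_j(k₃)/(λ₁λ₂⋯λ_{j+1}) ≠ 0 for all n (equivalently P*_n(k₂;k₃) ≠ 0 for all n). Define the iterated kernel polynomials P*_n(k₂,k₃;x) := (x − k₃)^{−1}[P*_{n+1}(k₂;x) − (P*_{n+1}(k₂;k₃)/P*_n(k₂;k₃)) P*_n(k₂;x)]. Fix n ≥ 1 and let L̃_n, M̃_n ∈ ℂ satisfy L̃_n + M̃_n P_n(k₁)/(λ_{n+1} P_{n−1}(k₁)) = P_{n+2}(k₁)/P_{n+1}(k₁) − P_{n+2}(k₂)/P_{n+1}(k₂) − P*_{n+1}(k₂;k₃)/P*_n(k₂;k₃), and set S*_{n+1}(k₁;x) := P*_{n+1}(k₁;x) + L̃_n P*_n(k₁;x) + M̃_n P*_{n−1}(k₁;x) (a monic quasi-type kernel polynomial of order two). Then, with α_n := −M̃_n P_n(k₁)/(λ_{n+1}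 P_{n−1}(k₁)) and β_n := α_n c_{n+1} + L̃_n P_{n+1}(k₁)/P_n(k₁) − M̃_n + λ_{n+2} K_{n+1}(k₂,k₃)/K_n(k₂,k₃), the polynomial identity (x − k₁) S*_{n+1}(k₁;x) − (x − k₂)(x − k₃) P*_n(k₂,k₃;x) = (α_n x − β_n) P_n(x) holds. -/
open Polynomial

/-- Christoffel–Darboux identity, abstract ℂ version. -/
lemma cd_aux (p : ℕ → Polynomial ℂ) (cc ll : ℕ → ℂ) (k2 : ℂ)
    (h0 : p 0 = 1) (h1 : p 1 = X - C (cc 1))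
    (hrec : ∀ m, X * p (m+1) = p (m+2) + C (cc (m+2)) * p (m+1) + C (ll (m+2)) * p m) :
    ∀ m, (X - C k2) * (∑ j ∈ Finset.range (m+1),
        C ((p j).eval k2 * ∏ i ∈ Finset.Ico (j+1) (m+1), ll (i+1)) * p j) =
      C ((p m).eval k2) * p (m+1) - C ((p (m+1)).eval k2) * p m := by
  intro m
  induction m with
  | zero =>
      simp [h0, h1]
  | succ m ih =>
      have hsum : ∑ j ∈ Finset.range (m+1),
          C ((p j).eval k2 * ∏ i ∈ Finset.Ico (j+1) (m+2), ll (i+1)) * p j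
          = C (ll (m+2)) * ∑ j ∈ Finset.range (m+1),
          C ((p j).eval k2 * ∏ i ∈ Finset.Ico (j+1) (m+1), ll (i+1)) * p j := by
        rw [Finset.mul_sum]
        refine Finset.sum_congr rfl ?_
        intro j hj
        have hle : j + 1 ≤ m + 1 := by
          simp at hj; omega
        rw [Finset.prod_Ico_succ_top hle, C_mul, C_mul, C_mul]
        ring
      have hev : k2 * (p (m+1)).eval k2 = (p (m+2)).eval k2 + cc (m+2) * (p (m+1)).eval k2 + ll (m+2) * (p m).eval k2 := by
        have := congrArg (Polynomial.eval k2) (hrec m)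
        simpa using this
      have hevC : C (k2 * (p (m+1)).eval k2) = C ((p (m+2)).eval k2 + cc (m+2) * (p (m+1)).eval k2 + ll (m+2) * (p m).eval k2) := by rw [hev]
      rw [Finset.sum_range_succ, hsum]
      simp only [Finset.Ico_self, Finset.prod_empty, mul_one]
      simp only [C_add, C_mul] at hevC
      linear_combination C (ll (m+2)) * ih + C ((p (m+1)).eval k2) * hrec m - p (m+1) * hevC

/-- The kernel polynomial equals the Christoffel–Darboux sum. -/
lemma kernel_sum_aux (p q : ℕ → Polynomial ℂ) (ll : ℕ → ℂ) (k2 : ℂ)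
    (hk2 : ∀ n, (p n).eval k2 ≠ 0)
    (hq : ∀ m, (X - C k2) * q m =
      p (m + 1) - C ((p (m + 1)).eval k2 / (p m).eval k2) * p m)
    (hcd : ∀ m, (X - C k2) * (∑ j ∈ Finset.range (m+1),
        C ((p j).eval k2 * ∏ i ∈ Finset.Ico (j+1) (m+1), ll (i+1)) * p j) =
      C ((p m).eval k2) * p (m+1) - C ((p (m+1)).eval k2) * p m) :
    ∀ m, C ((p m).eval k2) * q m = ∑ j ∈ Finset.range (m+1),
        C ((p j).eval k2 * ∏ i ∈ Finset.Ico (j+1) (m+1), ll (i+1)) * p j := by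
  intro m
  have hne : (X - C k2 : Polynomial ℂ) ≠ 0 := X_sub_C_ne_zero k2
  apply mul_left_cancel₀ hne
  rw [hcd m]
  have h1 : (X - C k2) * (C ((p m).eval k2) * q m)
      = C ((p m).eval k2) * ((X - C k2) * q m) := by ring
  rw [h1, hq m, mul_sub, ← mul_assoc, ← C_mul,
    mul_div_cancel₀ _ (hk2 m)]

theorem stmt_9
    (L : Polynomial ℝ →ₗ[ℝ] ℝ)
    (hposdef : ∀ p : Polynomial ℝ, p ≠ 0 → 0 < L (p ^ 2))
    (P : ℕ → Polynomial ℝ)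
    (hmonic : ∀ n, (P n).Monic)
    (hdeg : ∀ n, (P n).natDegree = n)
    (horth : ∀ m n, m ≠ n → L (P m * P n) = 0)
    (c lam : ℕ → ℝ)
    (hP0 : P 0 = 1)
    (hP1 : P 1 = X - Polynomial.C (c 1))
    (hrec : ∀ n, 1 ≤ n → X * P n =
      P (n + 1) + Polynomial.C (c (n + 1)) * P n + Polynomial.C (lam (n + 1)) * P (n - 1))
    (hlampos : ∀ n, 1 ≤ n → 0 < lam (n + 1))
    (hlam1 : lam 1 = L 1)
    (k1 k2 k3 : ℂ)
    (hk1 : ∀ n, (cpx (P n)).eval k1 ≠ 0)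
    (hk2 : ∀ n, (cpx (P n)).eval k2 ≠ 0)
    (Pstar1 : ℕ → Polynomial ℂ)
    (hPstar1 : ∀ n, (X - Polynomial.C k1) * Pstar1 n =
      cpx (P (n + 1)) -
        Polynomial.C ((cpx (P (n + 1))).eval k1 / (cpx (P n)).eval k1) * cpx (P n))
    (Pstar2 : ℕ → Polynomial ℂ)
    (hPstar2 : ∀ n, (X - Polynomial.C k2) * Pstar2 n =
      cpx (P (n + 1)) -
        Polynomial.C ((cpx (P (n + 1))).eval k2 / (cpx (P n)).eval k2) * cpx (P n))
    (hPs2ne : ∀ n, (Pstar2 n).eval k3 ≠ 0)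
    (Pss : ℕ → Polynomial ℂ)
    (hPss : ∀ n, (X - Polynomial.C k3) * Pss n =
      Pstar2 (n + 1) -
        Polynomial.C ((Pstar2 (n + 1)).eval k3 / (Pstar2 n).eval k3) * Pstar2 n)
    (K : ℕ → ℂ)
    (hK : ∀ n, K n = ∑ j ∈ Finset.range (n + 1),
      (cpx (P j)).eval k2 * (cpx (P j)).eval k3 /
        ∏ i ∈ Finset.range (j + 1), (lam (i + 1) : ℂ))
    (hKne : ∀ n, K n ≠ 0)
    (n : ℕ) (hn : 1 ≤ n)
    (Lt Mt : ℂ)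
    (hcond : Lt + Mt * (cpx (P n)).eval k1 /
          ((lam (n + 1) : ℂ) * (cpx (P (n - 1))).eval k1) =
        (cpx (P (n + 2))).eval k1 / (cpx (P (n + 1))).eval k1 -
          (cpx (P (n + 2))).eval k2 / (cpx (P (n + 1))).eval k2 -
          (Pstar2 (n + 1)).eval k3 / (Pstar2 n).eval k3) :
    ∀ α β : ℂ,
      α = -(Mt * (cpx (P n)).eval k1 /
            ((lam (n + 1) : ℂ) * (cpx (P (n - 1))).eval k1)) →
      β = α * (c (n + 1) : ℂ) +
            Lt * ((cpx (P (n + 1))).eval k1 / (cpx (P n)).eval k1) - Mt +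
            (lam (n + 2) : ℂ) * (K (n + 1) / K n) →
      (X - Polynomial.C k1) *
          (Pstar1 (n + 1) + Polynomial.C Lt * Pstar1 n +
            Polynomial.C Mt * Pstar1 (n - 1)) -
          (X - Polynomial.C k2) * (X - Polynomial.C k3) * Pss n =
        (Polynomial.C α * X - Polynomial.C β) * cpx (P n) := by
  have hlamC : ∀ i : ℕ, ((lam (i+1) : ℂ)) ≠ 0 := by
    intro i
    have : (0:ℝ) < lam (i+1) := by
      rcases Nat.eq_zero_or_pos i with h | h
      · subst h
        have := hposdef 1 one_ne_zero
        simpa [hlam1] using this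
      · exact hlampos i h
    exact_mod_cast this.ne'
  have hrecC : ∀ m, X * cpx (P (m+1))
      = cpx (P (m+2)) + C ((c (m+2):ℂ)) * cpx (P (m+1)) + C ((lam (m+2):ℂ)) * cpx (P m) := by
    intro m
    have := congrArg (Polynomial.map (algebraMap ℝ ℂ)) (hrec (m+1) (by omega))
    simpa [cpx, Polynomial.map_mul, Polynomial.map_add, Polynomial.map_C] using this
  have h0C : cpx (P 0) = 1 := by simp [cpx, hP0]
  have h1C : cpx (P 1) = X - C ((c 1 : ℂ)) := by simp [cpx, hP1]
  have hcd := cd_aux (fun m => cpx (P m)) (fun i => (c i : ℂ)) (fun i => (lam i : ℂ)) k2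
    h0C h1C hrecC
  have hks := kernel_sum_aux (fun m => cpx (P m)) Pstar2 (fun i => (lam i : ℂ)) k2
    hk2 hPstar2 hcd
  have evS : ∀ m, (cpx (P m)).eval k2 * (Pstar2 m).eval k3
      = (∏ i ∈ Finset.range (m+1), (lam (i+1):ℂ)) * K m := by
    intro m
    have h := congrArg (Polynomial.eval k3) (hks m)
    simp only [eval_mul, eval_C, eval_finset_sum] at h
    rw [h, hK m, Finset.mul_sum]
    refine Finset.sum_congr rfl ?_
    intro j hj
    have hjm : j + 1 ≤ m + 1 := by simp at hj; omega
    have hπ : (∏ i ∈ Finset.range (m+1), (lam (i+1):ℂ))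
        = (∏ i ∈ Finset.range (j+1), (lam (i+1):ℂ))
          * ∏ i ∈ Finset.Ico (j+1) (m+1), (lam (i+1):ℂ) :=
      (Finset.prod_range_mul_prod_Ico _ hjm).symm
    have hπj : (∏ i ∈ Finset.range (j+1), (lam (i+1):ℂ)) ≠ 0 :=
      Finset.prod_ne_zero_iff.mpr fun i _ => hlamC i
    rw [hπ]
    field_simp
  have key : (Pstar2 (n+1)).eval k3 / (Pstar2 n).eval k3
        * ((cpx (P (n+1))).eval k2 / (cpx (P n)).eval k2)
      = (lam (n+2):ℂ) * (K (n+1) / K n) := by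
    have h1 : (cpx (P (n+1))).eval k2 * (Pstar2 (n+1)).eval k3
        = (∏ i ∈ Finset.range (n+1), (lam (i+1):ℂ)) * (lam (n+2):ℂ) * K (n+1) := by
      have := evS (n+1)
      rwa [Finset.prod_range_succ] at this
    have h2 := evS n
    have hπn : (∏ i ∈ Finset.range (n+1), (lam (i+1):ℂ)) ≠ 0 :=
      Finset.prod_ne_zero_iff.mpr fun i _ => hlamC i
    rw [div_mul_div_comm, mul_div_assoc',
      div_eq_div_iff (mul_ne_zero (hPs2ne n) (hk2 n)) (hKne n)]
    linear_combination K n * h1 - ((lam (n+2):ℂ) * K (n+1)) * h2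
  intro α β hα hβ
  obtain ⟨m, rfl⟩ : ∃ m, n = m + 1 := ⟨n - 1, by omega⟩
  simp only [Nat.add_sub_cancel] at hcond hα ⊢
  have e1 : -((cpx (P (m+3))).eval k1 / (cpx (P (m+2))).eval k1) + Lt
      + (cpx (P (m+3))).eval k2 / (cpx (P (m+2))).eval k2
      + (Pstar2 (m+2)).eval k3 / (Pstar2 (m+1)).eval k3 = α := by
    linear_combination hcond - hα
  have e2 : -(Lt * ((cpx (P (m+2))).eval k1 / (cpx (P (m+1))).eval k1)) + Mt
      - ((Pstar2 (m+2)).eval k3 / (Pstar2 (m+1)).eval k3)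
        * ((cpx (P (m+2))).eval k2 / (cpx (P (m+1))).eval k2)
      = α * (c (m+2):ℂ) - β := by
    linear_combination hβ - key
  have e3 : -(Mt * ((cpx (P (m+1))).eval k1 / (cpx (P m)).eval k1))
      = α * (lam (m+2):ℂ) := by
    have hne : ((lam (m+2):ℂ)) ≠ 0 := hlamC (m+1)
    have hα' : α = -(Mt * (cpx (P (m+1))).eval k1
        / ((lam (m+2):ℂ) * (cpx (P m)).eval k1)) := hα
    rw [hα']
    field_simp
  have e1C := congrArg (C : ℂ → Polynomial ℂ) e1
  have e2C := congrArg (C : ℂ → Polynomial ℂ) e2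
  have e3C := congrArg (C : ℂ → Polynomial ℂ) e3
  simp only [C_add, C_neg, C_mul, C_sub] at e1C e2C e3C
  linear_combination hPstar1 (m+2) + C Lt * hPstar1 (m+1) + C Mt * hPstar1 m
    - (X - C k2) * hPss (m+1) - hPstar2 (m+2) + C ((Pstar2 (m+2)).eval k3 / (Pstar2 (m+1)).eval k3) * hPstar2 (m+1)
    - C α * hrecC m
    + cpx (P (m+2)) * e1C + cpx (P (m+1)) * e2C + cpx (P m) * e3C
end

section
/- Fix k ∈ ℝ with P_n(k) ≠ 0 for all n. Then for every n ≥ 0, lim_{x→k} P*_{n+1}(k;x)/P*_n(k;x) = (P_n(k)/P_{n+1}(k)) · λ_{n+2} · (1 + P_{n+1}(k)² / (λ₁λ₂⋯λ_{n+2} · Σ_{j=0}^{n} P_j(k)²/(λ₁λ₂⋯λ_{j+1}))). -/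
open Polynomial Filter Topology

/-- With `𝓛` a positive definite moment functional (`λ₁ := 𝓛(1)`), `P`
its monic OPS with recurrence coefficients `c`, `λ`, `k ∈ ℝ` with `P_n(k) ≠ 0` for all `n`,
and `Pstar` the monic kernel polynomials at `k`: for every `n ≥ 0`,
`lim_{x→k} P*_{n+1}(k;x)/P*_n(k;x)
  = (P_n(k)/P_{n+1}(k)) λ_{n+2} (1 + P_{n+1}(k)²/(λ₁⋯λ_{n+2} ∑_{j=0}^n P_j(k)²/(λ₁⋯λ_{j+1})))`. -/
theorem stmt_10
    (L : Polynomial ℝ →ₗ[ℝ] ℝ)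
    (hposdef : ∀ p : Polynomial ℝ, p ≠ 0 → 0 < L (p ^ 2))
    (P : ℕ → Polynomial ℝ)
    (hmonic : ∀ n, (P n).Monic)
    (hdeg : ∀ n, (P n).natDegree = n)
    (horth : ∀ m n, m ≠ n → L (P m * P n) = 0)
    (c lam : ℕ → ℝ)
    (hP0 : P 0 = 1)
    (hP1 : P 1 = X - Polynomial.C (c 1))
    (hrec : ∀ n, 1 ≤ n → X * P n =
      P (n + 1) + Polynomial.C (c (n + 1)) * P n + Polynomial.C (lam (n + 1)) * P (n - 1))
    (hlampos : ∀ n, 1 ≤ n → 0 < lam (n + 1))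
    (hlam1 : lam 1 = L 1)
    (k : ℝ)
    (hk : ∀ n, (P n).eval k ≠ 0)
    (Pstar : ℕ → Polynomial ℝ)
    (hPstar : ∀ n, (X - Polynomial.C k) * Pstar n =
      P (n + 1) - Polynomial.C ((P (n + 1)).eval k / (P n).eval k) * P n) :
    ∀ n : ℕ,
      Tendsto (fun x : ℝ => (Pstar (n + 1)).eval x / (Pstar n).eval x) (𝓝[≠] k)
        (𝓝 (((P n).eval k / (P (n + 1)).eval k) * lam (n + 2) *
          (1 + ((P (n + 1)).eval k) ^ 2 /
            ((∏ i ∈ Finset.range (n + 2), lam (i + 1)) *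
              ∑ j ∈ Finset.range (n + 1),
                ((P j).eval k) ^ 2 / ∏ i ∈ Finset.range (j + 1), lam (i + 1)))))  := by
  have hlam' : ∀ m : ℕ, 0 < lam (m + 1) := by
    intro m
    cases m with
    | zero =>
      rw [hlam1]
      simpa using hposdef 1 one_ne_zero
    | succ m => exact hlampos (m + 1) (Nat.le_add_left 1 m)
  have hLampos : ∀ m : ℕ, 0 < ∏ i ∈ Finset.range m, lam (i + 1) := by
    intro m
    exact Finset.prod_pos fun i _ => hlam' i
  have hSpos : ∀ m : ℕ, 0 < ∑ j ∈ Finset.range (m + 1),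
      ((P j).eval k) ^ 2 / ∏ i ∈ Finset.range (j + 1), lam (i + 1) := by
    intro m
    refine Finset.sum_pos (fun j _ => div_pos ?_ (hLampos _)) ⟨0, by simp⟩
    exact lt_of_le_of_ne (sq_nonneg _) (Ne.symm (pow_ne_zero 2 (hk j)))
  -- Christoffel-Darboux (confluent form), by induction
  have hD : ∀ m : ℕ,
      ((P (m + 1)).derivative.eval k) * (P m).eval k
        - ((P m).derivative.eval k) * (P (m + 1)).eval k
      = (∏ i ∈ Finset.range (m + 1), lam (i + 1)) *
          ∑ j ∈ Finset.range (m + 1),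
            ((P j).eval k) ^ 2 / ∏ i ∈ Finset.range (j + 1), lam (i + 1) := by
    intro m
    induction m with
    | zero =>
      have h1 : lam 1 ≠ 0 := ne_of_gt (hlam' 0)
      simp [hP0, hP1]
      field_simp
    | succ m ih =>
      have hm : 1 ≤ m + 1 := Nat.le_add_left 1 m
      have E1 := congrArg (Polynomial.eval k) (hrec (m + 1) hm)
      have E2 := congrArg (fun p : Polynomial ℝ => p.derivative.eval k) (hrec (m + 1) hm)
      simp only [eval_mul, eval_add, eval_C, eval_X] at E1
      simp only [derivative_mul, derivative_add, derivative_X, derivative_C, eval_add,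
        eval_mul, eval_X, eval_C, one_mul, zero_mul, add_zero, zero_add] at E2
      have hstep :
          ((P (m + 2)).derivative.eval k) * (P (m + 1)).eval k
            - ((P (m + 1)).derivative.eval k) * (P (m + 2)).eval k
          = ((P (m + 1)).eval k) ^ 2 + lam (m + 2) *
              (((P (m + 1)).derivative.eval k) * (P m).eval k
                - ((P m).derivative.eval k) * (P (m + 1)).eval k) := by
        have h1 : m + 1 + 1 = m + 2 := rfl
        have h2 : m + 1 - 1 = m := rfl
        rw [h1, h2] at E1 E2
        linear_combination ((P (m + 1)).derivative.eval k) * E1 - ((P (m + 1)).eval k) * E2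
      rw [hstep, ih]
      conv_rhs => rw [Finset.sum_range_succ, Finset.prod_range_succ]
      rw [mul_add, mul_div_cancel₀ _
        (mul_ne_zero (ne_of_gt (hLampos (m + 1))) (ne_of_gt (hlam' (m + 1))))]
      ring
  -- value of Pstar at k
  have hstar : ∀ m : ℕ, (Pstar m).eval k =
      (∏ i ∈ Finset.range (m + 1), lam (i + 1)) *
        (∑ j ∈ Finset.range (m + 1),
          ((P j).eval k) ^ 2 / ∏ i ∈ Finset.range (j + 1), lam (i + 1)) / (P m).eval k := by
    intro m
    have h := congrArg (fun p : Polynomial ℝ => p.derivative.eval k) (hPstar m)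
    simp only [derivative_mul, derivative_sub, derivative_X, derivative_C, eval_add, eval_sub,
      eval_mul, eval_X, eval_C, one_mul, zero_mul, sub_self, add_zero, zero_add, mul_zero,
      zero_sub, zero_mul, sub_zero] at h
    rw [eq_div_iff (hk m), ← hD m]
    have hem := hk m
    field_simp at h
    linear_combination h
  have hne : ∀ m : ℕ, (Pstar m).eval k ≠ 0 := by
    intro m
    rw [hstar m]
    exact div_ne_zero (ne_of_gt (mul_pos (hLampos _) (hSpos _))) (hk m)
  intro n
  have hcont : Tendsto (fun x : ℝ => (Pstar (n + 1)).eval x / (Pstar n).eval x) (𝓝 k)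
      (𝓝 ((Pstar (n + 1)).eval k / (Pstar n).eval k)) :=
    Tendsto.div ((Pstar (n + 1)).continuous_aeval.tendsto k)
      ((Pstar n).continuous_aeval.tendsto k) (hne n)
  have hval : (Pstar (n + 1)).eval k / (Pstar n).eval k
      = ((P n).eval k / (P (n + 1)).eval k) * lam (n + 2) *
          (1 + ((P (n + 1)).eval k) ^ 2 /
            ((∏ i ∈ Finset.range (n + 2), lam (i + 1)) *
              ∑ j ∈ Finset.range (n + 1),
                ((P j).eval k) ^ 2 / ∏ i ∈ Finset.range (j + 1), lam (i + 1))) := by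
    rw [hstar (n + 1), hstar n]
    rw [show n + 1 + 1 = n + 2 from rfl, Finset.sum_range_succ (n := n + 1)]
    have hΛ1 : (∏ i ∈ Finset.range (n + 1), lam (i + 1)) ≠ 0 := ne_of_gt (hLampos _)
    have hΛ2 : (∏ i ∈ Finset.range (n + 2), lam (i + 1)) ≠ 0 := ne_of_gt (hLampos _)
    have hS : (∑ j ∈ Finset.range (n + 1),
        ((P j).eval k) ^ 2 / ∏ i ∈ Finset.range (j + 1), lam (i + 1)) ≠ 0 :=
      ne_of_gt (hSpos n)
    have hP1 := hk n
    have hP2 := hk (n + 1)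
    rw [Finset.prod_range_succ (n := n + 1)] at hΛ2 ⊢
    field_simp
  rw [← hval]
  exact hcont.mono_left nhdsWithin_le_nhds
end

section
/- Fix k ∈ ℝ with P_n(k) ≠ 0 for all n. Then for every n ≥ 0, lim_{x→k} P*_n(k;x)/P*_{n+1}(k;x) = (P_{n+1}(k)/P_n(k)) · (1/λ_{n+2}) · (1 − P_{n+1}(k)² / (λ₁λ₂⋯λ_{n+2} · Σ_{j=0}^{n+1} P_j(k)²/(λ₁λ₂⋯λ_{j+1}))). -/
open Polynomial Filter Topology

/-- With `𝓛` a positive definite moment functional (`λ₁ := 𝓛(1)`), `P`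
its monic OPS with recurrence coefficients `c`, `λ`, `k ∈ ℝ` with `P_n(k) ≠ 0` for all `n`,
and `Pstar` the monic kernel polynomials at `k`: for every `n ≥ 0`,
`lim_{x→k} P*_n(k;x)/P*_{n+1}(k;x)
  = (P_{n+1}(k)/P_n(k)) (1/λ_{n+2}) (1 − P_{n+1}(k)²/(λ₁⋯λ_{n+2} ∑_{j=0}^{n+1} P_j(k)²/(λ₁⋯λ_{j+1})))`. -/
theorem stmt_11
    (L : Polynomial ℝ →ₗ[ℝ] ℝ)
    (hposdef : ∀ p : Polynomial ℝ, p ≠ 0 → 0 < L (p ^ 2))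
    (P : ℕ → Polynomial ℝ)
    (hmonic : ∀ n, (P n).Monic)
    (hdeg : ∀ n, (P n).natDegree = n)
    (horth : ∀ m n, m ≠ n → L (P m * P n) = 0)
    (c lam : ℕ → ℝ)
    (hP0 : P 0 = 1)
    (hP1 : P 1 = X - Polynomial.C (c 1))
    (hrec : ∀ n, 1 ≤ n → X * P n =
      P (n + 1) + Polynomial.C (c (n + 1)) * P n + Polynomial.C (lam (n + 1)) * P (n - 1))
    (hlampos : ∀ n, 1 ≤ n → 0 < lam (n + 1))
    (hlam1 : lam 1 = L 1)
    (k : ℝ)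
    (hk : ∀ n, (P n).eval k ≠ 0)
    (Pstar : ℕ → Polynomial ℝ)
    (hPstar : ∀ n, (X - Polynomial.C k) * Pstar n =
      P (n + 1) - Polynomial.C ((P (n + 1)).eval k / (P n).eval k) * P n) :
    ∀ n : ℕ,
      Tendsto (fun x : ℝ => (Pstar n).eval x / (Pstar (n + 1)).eval x) (𝓝[≠] k)
        (𝓝 (((P (n + 1)).eval k / (P n).eval k) * (1 / lam (n + 2)) *
          (1 - ((P (n + 1)).eval k) ^ 2 /
            ((∏ i ∈ Finset.range (n + 2), lam (i + 1)) *
              ∑ j ∈ Finset.range (n + 2),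
                ((P j).eval k) ^ 2 / ∏ i ∈ Finset.range (j + 1), lam (i + 1))))) := by
  -- abbreviations
  set Pi : ℕ → ℝ := fun m => ∏ i ∈ Finset.range m, lam (i + 1) with hPidef
  set Kk : ℕ → ℝ := fun m => ∑ j ∈ Finset.range m, ((P j).eval k) ^ 2 / Pi (j + 1) with hKdef
  have hlamQ : ∀ m : ℕ, 0 < lam (m + 1) := by
    intro m
    cases m with
    | zero =>
        rw [hlam1]
        have := hposdef 1 one_ne_zero
        simpa using this
    | succ m => exact hlampos (m + 1) (by omega)
  have hPiPos : ∀ m, 0 < Pi m := by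
    intro m
    exact Finset.prod_pos fun i _ => hlamQ i
  have hKPos : ∀ m, 0 < Kk (m + 1) := by
    intro m
    apply Finset.sum_pos
    · intro j _
      exact div_pos ((sq_nonneg _).lt_of_ne (Ne.symm (pow_ne_zero 2 (hk j)))) (hPiPos _)
    · exact ⟨0, Finset.mem_range.mpr (by omega)⟩
  have hT : ∀ m : ℕ, Pi (m + 2) * Kk (m + 2)
      = lam (m + 2) * (Pi (m + 1) * Kk (m + 1)) + ((P (m + 1)).eval k) ^ 2 := by
    intro m
    have hPis : Pi (m + 2) = Pi (m + 1) * lam (m + 2) := by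
      simp [hPidef, Finset.prod_range_succ]
    have hKs : Kk (m + 2) = Kk (m + 1) + ((P (m + 1)).eval k) ^ 2 / Pi (m + 2) := by
      simp [hKdef, Finset.sum_range_succ]
    rw [hKs, mul_add, mul_div_cancel₀ _ (hPiPos (m + 2)).ne', hPis]
    ring
  -- confluent Christoffel-Darboux
  have hD : ∀ n : ℕ, (derivative (P (n + 1))).eval k * (P n).eval k
      - (P (n + 1)).eval k * (derivative (P n)).eval k = Pi (n + 1) * Kk (n + 1) := by
    intro n
    induction n with
    | zero =>
        simp only [hP0, hP1, derivative_sub, derivative_X, derivative_C, derivative_one,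
          eval_sub, eval_one, eval_X, eval_C, eval_zero, sub_zero, mul_one, mul_zero, one_mul]
        simp [hPidef, hKdef, hP0, Finset.prod_range_one, Finset.sum_range_one]
        exact (mul_inv_cancel₀ (show lam 1 ≠ 0 by simpa using (hlamQ 0).ne')).symm
    | succ n ih =>
        have E := hrec (n + 1) (by omega)
        simp only [Nat.add_sub_cancel] at E
        have e1 := congrArg (fun q : Polynomial ℝ => q.eval k) E
        have e2 := congrArg (fun q : Polynomial ℝ => (derivative q).eval k) E
        simp only [derivative_mul, derivative_add, derivative_C, derivative_X,
          eval_add, eval_mul, eval_C, eval_X, zero_mul, one_mul, mul_zero, add_zero,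
          zero_add] at e1 e2
        simp only [show n + 1 + 1 = n + 2 from rfl] at e1 e2 ⊢
        rw [hT n]
        linear_combination (-(eval k (P (n + 1)))) * e2 +
          (eval k (derivative (P (n + 1)))) * e1 + lam (n + 2) * ih
  -- value of kernel polynomial at k
  have hPsEval : ∀ n : ℕ, (Pstar n).eval k
      = Pi (n + 1) * Kk (n + 1) / (P n).eval k := by
    intro n
    have e := congrArg (fun q : Polynomial ℝ => (derivative q).eval k) (hPstar n)
    simp only [derivative_mul, derivative_sub, derivative_C, derivative_X,
      eval_add, eval_sub, eval_mul, eval_C, eval_X, sub_self, zero_mul, one_mul,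
      mul_zero, add_zero, zero_add, zero_sub, sub_zero] at e
    have hDn := hD n
    have ha := hk n
    field_simp at e ⊢
    nlinarith [e, hDn]
  intro n
  have hden : (Pstar (n + 1)).eval k ≠ 0 := by
    rw [hPsEval (n + 1)]
    exact div_ne_zero (mul_pos (hPiPos _) (hKPos _)).ne' (hk _)
  have hcont : ContinuousAt (fun x : ℝ => (Pstar n).eval x / (Pstar (n + 1)).eval x) k :=
    ContinuousAt.div ((Pstar n).continuous.continuousAt)
      ((Pstar (n + 1)).continuous.continuousAt) hden
  have hval : (Pstar n).eval k / (Pstar (n + 1)).eval k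
      = ((P (n + 1)).eval k / (P n).eval k) * (1 / lam (n + 2)) *
          (1 - ((P (n + 1)).eval k) ^ 2 / (Pi (n + 2) * Kk (n + 2))) := by
    rw [hPsEval n, hPsEval (n + 1)]
    have h2 : Pi (n + 1 + 1) * Kk (n + 1 + 1) = Pi (n + 2) * Kk (n + 2) := by norm_num
    rw [h2, hT n]
    have ha : (P n).eval k ≠ 0 := hk n
    have hb : (P (n + 1)).eval k ≠ 0 := hk (n + 1)
    have hl : lam (n + 2) ≠ 0 := (hlamQ (n + 1)).ne'
    have hPK : (0:ℝ) < Pi (n + 1) * Kk (n + 1) := mul_pos (hPiPos _) (hKPos _)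
    have h4 : lam (n + 2) * (Pi (n + 1) * Kk (n + 1)) + ((P (n + 1)).eval k) ^ 2 ≠ 0 := by
      have := mul_pos (hlamQ (n + 1)) hPK
      nlinarith [sq_nonneg ((P (n + 1)).eval k)]
    field_simp
    have h4' : Pi (n + 1) * Kk (n + 1) * lam (n + 2) + eval k (P (n + 1)) ^ 2 ≠ 0 := by
      rw [mul_comm _ (lam _)]; exact h4
    rw [eq_sub_iff_add_eq, ← add_div, div_self h4']
  have goal_eq : (Pi (n + 2) * Kk (n + 2))
      = ((∏ i ∈ Finset.range (n + 2), lam (i + 1)) *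
          ∑ j ∈ Finset.range (n + 2),
            ((P j).eval k) ^ 2 / ∏ i ∈ Finset.range (j + 1), lam (i + 1)) := by
    simp [hPidef, hKdef]
  rw [← goal_eq, ← hval]
  exact hcont.tendsto.mono_left nhdsWithin_le_nhds
end

section
/- For every n ≥ 0, lim_{x→1} Ĉ*_{n+1}(1;x)/Ĉ*_n(1;x) = (2n+3)/(2(2n+1)); consequently lim_{n→∞} lim_{x→1} Ĉ*_{n+1}(1;x)/Ĉ*_n(1;x) = 1/2. -/
open Polynomial Filter Topology

/-- The monic Chebyshev polynomials of the first kind: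
`Ĉ_0 = 1`, `Ĉ_1 = x`, `Ĉ_2 = x Ĉ_1 − (1/2) Ĉ_0`, and
`Ĉ_{n+1} = x Ĉ_n − (1/4) Ĉ_{n−1}` for `n ≥ 2`. -/
noncomputable def cheb : ℕ → Polynomial ℝ
  | 0 => 1
  | 1 => X
  | 2 => X * X - Polynomial.C (1 / 2)
  | n + 3 => X * cheb (n + 2) - Polynomial.C (1 / 4) * cheb (n + 1)

/-- The monic kernel polynomials of the Chebyshev polynomials at `k = 1`:
`Ĉ*_n(1;x) = (x − 1)⁻¹ [Ĉ_{n+1}(x) − (Ĉ_{n+1}(1)/Ĉ_n(1)) Ĉ_n(x)]`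
(an exact division by the monic polynomial `X − 1`). -/
noncomputable def chebStar (n : ℕ) : Polynomial ℝ :=
  (cheb (n + 1) - Polynomial.C ((cheb (n + 1)).eval 1 / (cheb n).eval 1) * cheb n) /ₘ
    (X - Polynomial.C 1)

lemma cheb_one : ∀ n : ℕ, (cheb (n+1)).eval 1 = 2 / 2^(n+1) ∧
    ((derivative (cheb (n+1))).eval 1 = ((n:ℝ)+1)^2 * (2 / 2^(n+1))) := by
  intro n
  induction n using Nat.twoStepInduction with
  | zero => refine ⟨by norm_num [cheb], by norm_num [cheb]⟩
  | one => refine ⟨by norm_num [cheb], by norm_num [cheb]⟩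
  | more n ih1 ih2 =>
    obtain ⟨a1, b1⟩ := ih1
    obtain ⟨a2, b2⟩ := ih2
    show (cheb (n+3)).eval 1 = _ ∧ _
    rw [show n+3 = n+3 from rfl]
    constructor
    · simp only [cheb, eval_sub, eval_mul, eval_X, eval_C, a1, a2]
      push_cast
      field_simp
      ring
    · simp only [cheb, derivative_sub, derivative_mul, derivative_X, derivative_C,
        eval_sub, eval_mul, eval_add, eval_X, eval_C, a1, a2, b1, b2, zero_mul, one_mul,
        eval_zero, zero_add]
      push_cast
      field_simp
      ring

lemma eval_div_sub_one (p : Polynomial ℝ) (h : p.eval 1 = 0) :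
    (p /ₘ (X - C 1)).eval 1 = (derivative p).eval 1 := by
  have hm : (X - C (1:ℝ)).Monic := monic_X_sub_C 1
  have h2 : p %ₘ (X - C 1) = 0 := by
    rw [Polynomial.modByMonic_X_sub_C_eq_C_eval, h, map_zero]
  have h3 : p = (X - C 1) * (p /ₘ (X - C 1)) := by
    conv_lhs => rw [← Polynomial.modByMonic_add_div p (X - C 1)]
    rw [h2, zero_add]
  have h4 := congrArg (fun q => (derivative q).eval 1) h3
  simp [derivative_mul, eval_mul, eval_add, eval_sub, Polynomial.C_1] at h4 ⊢
  rw [h4]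

lemma chebStar_one (n : ℕ) : (chebStar n).eval 1 = (2*(n:ℝ)+1) / 2^n := by
  cases n with
  | zero =>
    have : chebStar 0 = 1 := by
      have h1 : chebStar 0 = ((X - C (1:ℝ)) * 1) /ₘ (X - C 1) := by
        rw [chebStar]
        norm_num [cheb]
      rw [h1, mul_divByMonic_cancel_left _ (monic_X_sub_C 1)]
    simp [this]
  | succ n =>
    obtain ⟨a1, b1⟩ := cheb_one n
    obtain ⟨a2, b2⟩ := cheb_one (n+1)
    have h2 : (2:ℝ)^(n+1) ≠ 0 := by positivity
    have h3 : (2:ℝ)^(n+2) ≠ 0 := by positivity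
    have hc : (cheb (n+2)).eval 1 / (cheb (n+1)).eval 1 = 1/2 := by
      rw [a1, a2]; field_simp; ring
    have hp : (cheb (n+2) - Polynomial.C ((cheb (n+2)).eval 1 / (cheb (n+1)).eval 1)
        * cheb (n+1)).eval 1 = 0 := by
      simp only [eval_sub, eval_mul, eval_C, hc, a1, a2]
      field_simp; ring
    rw [chebStar, eval_div_sub_one _ hp]
    simp only [derivative_sub, derivative_mul, derivative_C, eval_sub, eval_mul, eval_C,
      zero_mul, zero_add, hc, b1, b2]
    push_cast
    field_simp
    ring


/-- For every `n ≥ 0`,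
`lim_{x→1} Ĉ*_{n+1}(1;x)/Ĉ*_n(1;x) = (2n+3)/(2(2n+1))`; consequently
`lim_{n→∞} lim_{x→1} Ĉ*_{n+1}(1;x)/Ĉ*_n(1;x) = 1/2`. -/
theorem stmt_12 :
    (∀ n : ℕ,
      Tendsto (fun x : ℝ => (chebStar (n + 1)).eval x / (chebStar n).eval x)
        (𝓝[≠] (1 : ℝ))
        (𝓝 ((2 * (n : ℝ) + 3) / (2 * (2 * (n : ℝ) + 1))))) ∧
    Tendsto (fun n : ℕ => (2 * (n : ℝ) + 3) / (2 * (2 * (n : ℝ) + 1))) atTop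
      (𝓝 (1 / 2)) := by
  constructor
  · intro n
    have hne : (chebStar n).eval 1 ≠ 0 := by
      rw [chebStar_one]; positivity
    have h1 : Tendsto (fun x : ℝ => (chebStar (n+1)).eval x) (𝓝[≠] (1:ℝ))
        (𝓝 ((chebStar (n+1)).eval 1)) :=
      ((chebStar (n+1)).continuousAt).tendsto.mono_left nhdsWithin_le_nhds
    have h2 : Tendsto (fun x : ℝ => (chebStar n).eval x) (𝓝[≠] (1:ℝ))
        (𝓝 ((chebStar n).eval 1)) :=
      ((chebStar n).continuousAt).tendsto.mono_left nhdsWithin_le_nhds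
    have := h1.div h2 hne
    convert this using 2
    case e'_3 => rfl
    rw [chebStar_one, chebStar_one]
    have h4 : (2:ℝ)^(n+1) ≠ 0 := by positivity
    have h5 : (2:ℝ)^n ≠ 0 := by positivity
    have h6 : (2*(n:ℝ)+1) ≠ 0 := by positivity
    push_cast
    field_simp
    ring
  · have heq : (fun n : ℕ => (2 * (n : ℝ) + 3) / (2 * (2 * (n : ℝ) + 1)))
        = fun n : ℕ => 1/2 + (2 * (n:ℝ) + 1)⁻¹ := by
      funext n
      have : (2 * (2 * (n:ℝ) + 1)) ≠ 0 := by positivity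
      field_simp
      ring
    rw [heq]
    have hA : Tendsto (fun n : ℕ => (n:ℝ)) atTop atTop := tendsto_natCast_atTop_atTop
    have h0 : Tendsto (fun n : ℕ => (2 * (n:ℝ) + 1)) atTop atTop :=
      tendsto_atTop_add_const_right _ _ (hA.const_mul_atTop (by norm_num))
    have := h0.inv_tendsto_atTop
    have h2 := (tendsto_const_nhds (x := (1/2 : ℝ))).add this
    simpa using h2
end

section
/- For every n ≥ 0 the polynomial identity Ĉ_{n+1}(x) = Ĉ*_{n+1}(1;x) − (1/2) Ĉ*_n(1;x) holds (so each Ĉ_{n+1} is a quasi-type kernel polynomial of order one at k = 1), and lim_{x→1} Ĉ_{n+1}(x)/Ĉ*_{n+1}(1;x) = 2/(2n+3). -/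
open Polynomial Filter Topology

/-- Monic Chebyshev polynomials of the fourth kind. -/
noncomputable def kern : ℕ → Polynomial ℝ
  | 0 => 1
  | 1 => X + Polynomial.C (1 / 2)
  | n + 2 => X * kern (n + 1) - Polynomial.C (1 / 4) * kern n

lemma eval1_cheb : ∀ n : ℕ, (cheb (n + 1)).eval 1 = (1 / 2 : ℝ) ^ n := by
  intro n
  induction n using Nat.twoStepInduction with
  | zero => simp [cheb]
  | one => simp [cheb]; norm_num
  | more n ih1 ih2 =>
    show (cheb (n + 3)).eval 1 = _
    rw [cheb]
    simp only [eval_sub, eval_mul, eval_X, eval_C, ih1, ih2]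
    ring

lemma eval1_kern : ∀ n : ℕ, (kern n).eval 1 = (2 * (n : ℝ) + 1) / 2 ^ n := by
  intro n
  induction n using Nat.twoStepInduction with
  | zero => simp [kern]
  | one => simp [kern]; norm_num
  | more n ih1 ih2 =>
    show (kern (n + 2)).eval 1 = _
    rw [kern]
    simp only [eval_sub, eval_mul, eval_add, eval_X, eval_C, ih1, ih2]
    push_cast
    field_simp
    ring

lemma cheb_eq_kern : ∀ n : ℕ,
    cheb (n + 1) = kern (n + 1) - Polynomial.C (1 / 2) * kern n := by
  intro n
  induction n using Nat.twoStepInduction with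
  | zero =>
    show cheb 1 = kern 1 - _ * kern 0
    rw [cheb, kern, kern]; ring
  | one =>
    have hC2 : Polynomial.C (1/2 : ℝ) * Polynomial.C (1/2 : ℝ) = Polynomial.C (1/4 : ℝ) := by
      rw [← Polynomial.C_mul]; norm_num
    have hC4 : Polynomial.C (1/4 : ℝ) + Polynomial.C (1/4 : ℝ) = Polynomial.C (1/2 : ℝ) := by
      rw [← Polynomial.C_add]; norm_num
    show cheb 2 = kern (0 + 2) - _ * kern 1
    rw [cheb, kern.eq_3 0]
    show _ = (X * kern 1 - _ * kern 0) - _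
    rw [kern, kern]
    linear_combination hC2 + hC4
  | more n ih1 ih2 =>
    have ih2' : cheb (n + 2) = kern (n + 2) - Polynomial.C (1 / 2) * kern (n + 1) := ih2
    show cheb (n + 3) = kern ((n + 1) + 2) - _ * kern (n + 2)
    rw [cheb, ih1, ih2', kern.eq_3 (n + 1), kern.eq_3 n]
    ring

lemma mulD : ∀ n : ℕ,
    (X - Polynomial.C 1) * kern n =
      cheb (n + 1) - Polynomial.C ((cheb (n + 1)).eval 1 / (cheb n).eval 1) * cheb n := by
  intro n
  match n with
  | 0 =>
    have : ((cheb 1).eval 1 / (cheb 0).eval 1) = 1 := by simp [cheb]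
    rw [this, cheb, cheb, kern]; ring
  | (m + 1) =>
    have : ((cheb (m + 2)).eval 1 / (cheb (m + 1)).eval 1) = 1 / 2 := by
      rw [show m + 2 = (m + 1) + 1 from rfl, eval1_cheb, eval1_cheb]
      rw [pow_succ]
      field_simp
    have hC2 : Polynomial.C (1/2 : ℝ) * Polynomial.C (1/2 : ℝ) = Polynomial.C (1/4 : ℝ) := by
      rw [← Polynomial.C_mul]; norm_num
    have hC1 : Polynomial.C (1/2 : ℝ) + Polynomial.C (1/2 : ℝ) = Polynomial.C (1 : ℝ) := by
      rw [← Polynomial.C_add]; norm_num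
    rw [this, cheb_eq_kern (m + 1), cheb_eq_kern m,
      show kern (m + 2) = X * kern (m + 1) - Polynomial.C (1/4) * kern m from kern.eq_3 m]
    linear_combination (kern (m + 1)) * hC1 - (kern m) * hC2

lemma chebStar_eq_kern (n : ℕ) : chebStar n = kern n := by
  rw [chebStar, ← mulD n]
  exact Polynomial.mul_divByMonic_cancel_left _ (monic_X_sub_C 1)

/-- For every `n ≥ 0` the polynomial identity
`Ĉ_{n+1}(x) = Ĉ*_{n+1}(1;x) − (1/2) Ĉ*_n(1;x)` holds (so each `Ĉ_{n+1}` is a quasi-type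
kernel polynomial of order one at `k = 1`), and
`lim_{x→1} Ĉ_{n+1}(x)/Ĉ*_{n+1}(1;x) = 2/(2n+3)`. -/
theorem stmt_13 :
    ∀ n : ℕ,
      cheb (n + 1) = chebStar (n + 1) - Polynomial.C (1 / 2) * chebStar n ∧
      Tendsto (fun x : ℝ => (cheb (n + 1)).eval x / (chebStar (n + 1)).eval x)
        (𝓝[≠] (1 : ℝ))
        (𝓝 (2 / (2 * (n : ℝ) + 3))) := by
  intro n
  constructor
  · rw [chebStar_eq_kern, chebStar_eq_kern]; exact cheb_eq_kern n
  · have hden : (chebStar (n + 1)).eval 1 = (2 * (n : ℝ) + 3) / 2 ^ (n + 1) := by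
      rw [chebStar_eq_kern, eval1_kern]; push_cast; ring_nf
    have hden' : (chebStar (n + 1)).eval 1 ≠ 0 := by
      rw [hden]
      positivity
    have hval : (cheb (n + 1)).eval 1 / (chebStar (n + 1)).eval 1
        = 2 / (2 * (n : ℝ) + 3) := by
      rw [hden, eval1_cheb]
      have h3 : (2 * (n : ℝ) + 3) ≠ 0 := by positivity
      field_simp
      rw [pow_succ, ← mul_assoc, ← mul_pow]; norm_num
    have hc : ContinuousAt (fun x : ℝ =>
        (cheb (n + 1)).eval x / (chebStar (n + 1)).eval x) 1 := by
      exact ((cheb (n + 1)).continuousAt).div ((chebStar (n + 1)).continuousAt) hden'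
    have := hc.continuousWithinAt (s := {(1:ℝ)}ᶜ)
    rw [ContinuousWithinAt] at this
    rwa [hval] at this
end
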